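/- Let Ω ⊂ ℝ^N be bounded open, p ≥ 1, and f : Ω × ℝ × ℝ^N → [0,∞) a Carathéodory function. Suppose f satisfies: for every m > 0 and every x in a set of full measure the condition (H^conv) holds taking ε = diam Ω, i.e. there is a constant C (depending on bounds) such that f(x,t,ξ) ≤ C·((f⁻_{B(x,diam Ω)}(t,·))**(ξ) + 1) whenever (f⁻_{B(x,diam Ω)}(t,·))**(ξ) + |ξ|^{max(p,N)} is bounded by a fixed constant. Then for every m > 0 there exists K_m > 0 such that for a.e. x ∈ Ω, max over {(t,ξ) : |(t,ξ)| ≤ m} of f(x,t,ξ) is at most K_m. (In short: the anti-jump condition implies f is essentially bounded on bounded sets of (t,ξ), uniformly in x.) -/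

import Mathlib

open MeasureTheory Set

/-- Greatest convex minorant of `φ : ℝ^N → ℝ`: the pointwise supremum of all convex
functions lying below `φ`. -/
noncomputable def gcm {N : ℕ} (φ : EuclideanSpace ℝ (Fin N) → ℝ)
    (ξ : EuclideanSpace ℝ (Fin N)) : ℝ :=
  ⨆ g : {g : EuclideanSpace ℝ (Fin N) → ℝ // ConvexOn ℝ univ g ∧ ∀ x, g x ≤ φ x},
    g.1 ξ

/-- `f⁻_{B(x,ε)}(t,ξ) = essinf_{y ∈ B(x,ε) ∩ Ω} f(y,t,ξ)`. -/
noncomputable def fminus {N : ℕ} (Ω : Set (EuclideanSpace ℝ (Fin N)))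
    (f : EuclideanSpace ℝ (Fin N) → ℝ → EuclideanSpace ℝ (Fin N) → ℝ)
    (x : EuclideanSpace ℝ (Fin N)) (ε t : ℝ) (ξ : EuclideanSpace ℝ (Fin N)) : ℝ :=
  essInf (fun y => f y t ξ) (volume.restrict (Metric.ball x ε ∩ Ω))

/-- The anti-jump condition `(H^conv)` with exponent `p`. -/
def Hconv {N : ℕ} (Ω : Set (EuclideanSpace ℝ (Fin N)))
    (f : EuclideanSpace ℝ (Fin N) → ℝ → EuclideanSpace ℝ (Fin N) → ℝ) (p : ℝ) : Prop :=
  ∀ k₁ k₂ : ℝ, 0 < k₁ → 0 < k₂ → ∃ C > (0:ℝ),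
    ∀ᵐ x ∂(volume.restrict Ω), ∀ t ∈ Ioo (-k₁) k₁, ∀ ξ : EuclideanSpace ℝ (Fin N),
      ∀ ε > (0:ℝ),
        gcm (fminus Ω f x ε t) ξ + ‖ξ‖ ^ (max p (N:ℝ)) ≤ k₂ / ε ^ (N:ℝ) →
          f x t ξ ≤ C * (gcm (fminus Ω f x ε t) ξ + 1)

/-- If `f` is a non-negative Carathéodory function on a bounded open set
`Ω` satisfying the anti-jump condition `(H^conv)`, then `f` is essentially bounded on
bounded sets of `(t,ξ)`, uniformly in `x`. -/
theorem stmt10 {N : ℕ}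
    (Ω : Set (EuclideanSpace ℝ (Fin N))) (hΩo : IsOpen Ω) (hΩb : Bornology.IsBounded Ω)
    (p : ℝ) (hp : 1 ≤ p)
    (f : EuclideanSpace ℝ (Fin N) → ℝ → EuclideanSpace ℝ (Fin N) → ℝ)
    (hf_nonneg : ∀ x t ξ, 0 ≤ f x t ξ)
    (hf_meas : ∀ t ξ, Measurable fun x => f x t ξ)
    (hf_cont : ∀ᵐ x ∂(volume.restrict Ω),
      Continuous fun q : ℝ × EuclideanSpace ℝ (Fin N) => f x q.1 q.2)
    (hH : Hconv Ω f p) :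
    ∀ m : ℝ, 0 < m → ∃ K > (0:ℝ), ∀ᵐ x ∂(volume.restrict Ω),
      ∀ (t : ℝ) (ξ : EuclideanSpace ℝ (Fin N)), |t| ≤ m → ‖ξ‖ ≤ m →
        f x t ξ ≤ K := by
  intro m hm
  set μ := volume.restrict Ω with hμdef
  by_cases hμ : μ = 0
  · refine ⟨1, one_pos, ?_⟩
    rw [hμ]
    simp
  -- nonnegativity of the essential infimum
  have hφ0 : ∀ (t : ℝ) (ξ' : EuclideanSpace ℝ (Fin N)),
      0 ≤ essInf (fun y => f y t ξ') μ := by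
    intro t ξ'
    rw [essInf_eq_sSup]
    have h0 : (0:ℝ) ∈ {a : ℝ | μ {y | f y t ξ' < a} = 0} := by
      have : {y | f y t ξ' < (0:ℝ)} = ∅ := by
        ext y; simp [not_lt.mpr (hf_nonneg y t ξ')]
      simp [this]
    by_cases hb : BddAbove {a : ℝ | μ {y | f y t ξ' < a} = 0}
    · exact le_csSup hb h0
    · rw [Real.sSup_of_not_bddAbove hb]
  -- the set of continuity points
  set A : Set (EuclideanSpace ℝ (Fin N)) :=
    {x | Continuous fun q : ℝ × EuclideanSpace ℝ (Fin N) => f x q.1 q.2} with hAdef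
  have hAc : μ Aᶜ = 0 := by
    have := ae_iff.mp hf_cont
    simpa [hAdef, compl_setOf] using this
  have hA : μ A ≠ 0 := by
    intro h0
    apply hμ
    rw [← Measure.measure_univ_eq_zero]
    have : μ univ ≤ μ A + μ Aᶜ := by
      rw [← union_compl_self A]; exact measure_union_le _ _
    simpa [h0, hAc] using this
  -- F y : sup of f y over the closed ball of radius m
  set F : EuclideanSpace ℝ (Fin N) → ℝ := fun y =>
    sSup ((fun q : ℝ × EuclideanSpace ℝ (Fin N) => f y q.1 q.2) ''
      Metric.closedBall 0 m) with hFdef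
  have hfF : ∀ y ∈ A, ∀ (t : ℝ) (ξ : EuclideanSpace ℝ (Fin N)), |t| ≤ m → ‖ξ‖ ≤ m →
      f y t ξ ≤ F y := by
    intro y hy t ξ ht hξ
    have hcomp : IsCompact ((fun q : ℝ × EuclideanSpace ℝ (Fin N) => f y q.1 q.2) ''
        Metric.closedBall 0 m) :=
      (isCompact_closedBall _ _).image hy
    refine le_csSup hcomp.bddAbove ⟨(t, ξ), ?_, rfl⟩
    rw [Metric.mem_closedBall, dist_zero_right, Prod.norm_def]
    exact max_le (by rwa [Real.norm_eq_abs]) hξ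
  -- find n with positive measure sublevel set
  obtain ⟨n, hn⟩ : ∃ n : ℕ, μ (A ∩ {y | F y ≤ (n:ℝ)}) ≠ 0 := by
    by_contra hall
    push_neg at hall
    apply hA
    have hsub : A ⊆ ⋃ n : ℕ, A ∩ {y | F y ≤ (n:ℝ)} := by
      intro y hy
      obtain ⟨n, hn⟩ := exists_nat_ge (F y)
      exact mem_iUnion.mpr ⟨n, hy, hn⟩
    have := (measure_mono (μ := μ) hsub).trans (measure_iUnion_le _)
    simpa [hall, nonpos_iff_eq_zero] using this
  set En := A ∩ {y | F y ≤ (n:ℝ)} with hEndef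
  -- key bound on essInf
  have hkey : ∀ (t : ℝ) (ξ : EuclideanSpace ℝ (Fin N)), |t| ≤ m → ‖ξ‖ ≤ m →
      essInf (fun y => f y t ξ) μ ≤ (n:ℝ) := by
    intro t ξ ht hξ
    rw [essInf_eq_sSup]
    refine Real.sSup_le ?_ (Nat.cast_nonneg n)
    intro a ha
    simp only [mem_setOf_eq] at ha
    by_contra hna
    push_neg at hna
    have hsub : En ⊆ {y | f y t ξ < a} := by
      intro y hy
      exact lt_of_le_of_lt ((hfF y hy.1 t ξ ht hξ).trans hy.2) hna
    exact hn (le_antisymm ((measure_mono hsub).trans_eq ha) zero_le)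
  -- apply Hconv
  set q : ℝ := max p (N:ℝ) with hqdef
  have hq0 : 0 ≤ q := le_trans (by linarith) (le_max_left _ _)
  set ε : ℝ := Metric.diam Ω + 1 with hεdef
  have hε : 0 < ε := by
    have := Metric.diam_nonneg (s := Ω); linarith
  have hεN : 0 < ε ^ (N:ℝ) := Real.rpow_pos_of_pos hε _
  have hmq : 0 < (m+1) ^ q := Real.rpow_pos_of_pos (by linarith) _
  obtain ⟨C, hC, hae⟩ := hH (m+1) (((n:ℝ) + (m+1)^q + 1) * ε ^ (N:ℝ))
    (by linarith) (by positivity)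
  refine ⟨C * ((n:ℝ) + 1), by positivity, ?_⟩
  filter_upwards [hae, ae_restrict_mem hΩo.measurableSet] with x hx hxΩ
  intro t ξ ht hξ
  -- ball covers Ω
  have hball : Metric.ball x ε ∩ Ω = Ω := by
    refine inter_eq_right.mpr fun y hy => ?_
    rw [Metric.mem_ball]
    have := Metric.dist_le_diam_of_mem hΩb hy hxΩ
    rw [hεdef]; linarith
  have hfm : fminus Ω f x ε t = fun ξ' => essInf (fun y => f y t ξ') μ := by
    funext ξ'
    rw [fminus, hball]
  set φ : EuclideanSpace ℝ (Fin N) → ℝ := fun ξ' => essInf (fun y => f y t ξ') μ with hφdef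
  have hzero : ConvexOn ℝ univ (fun _ : EuclideanSpace ℝ (Fin N) => (0:ℝ)) ∧
      ∀ ξ', (0:ℝ) ≤ φ ξ' := ⟨convexOn_const 0 convex_univ, fun ξ' => hφ0 t ξ'⟩
  haveI hne : Nonempty {g : EuclideanSpace ℝ (Fin N) → ℝ //
      ConvexOn ℝ univ g ∧ ∀ x, g x ≤ φ x} := ⟨⟨fun _ => 0, hzero.1, hzero.2⟩⟩
  have hgcm_le : gcm φ ξ ≤ φ ξ := ciSup_le fun g => g.2.2 ξ
  have hφle : φ ξ ≤ (n:ℝ) := hkey t ξ ht hξ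
  have htmem : t ∈ Ioo (-(m+1)) (m+1) := by
    rcases abs_le.mp ht with ⟨h1, h2⟩
    exact ⟨by linarith, by linarith⟩
  have hcond : gcm (fminus Ω f x ε t) ξ + ‖ξ‖ ^ q ≤
      ((n:ℝ) + (m+1)^q + 1) * ε ^ (N:ℝ) / ε ^ (N:ℝ) := by
    rw [hfm, mul_div_assoc, div_self hεN.ne', mul_one]
    have hξq : ‖ξ‖ ^ q ≤ (m+1) ^ q :=
      Real.rpow_le_rpow (norm_nonneg ξ) (by linarith) hq0
    have := hgcm_le.trans hφle
    linarith
  have := hx t htmem ξ ε hε hcond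
  rw [hfm] at this
  calc f x t ξ ≤ C * (gcm φ ξ + 1) := this
    _ ≤ C * ((n:ℝ) + 1) := by
        have := hgcm_le.trans hφle
        nlinarith
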